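/- Let A be a unital associative k-algebra and α, β ∈ k nonzero. Define R_{α,β,γ}(a ⊗ b) = α·ab ⊗ 1 + β·1 ⊗ ab − γ·a ⊗ b. Then R_{α,β,α} ∘ R_{1/β, 1/α, 1/α} = id on A ⊗ A, i.e., R_{α,β,α} is invertible with inverse R_{1/β,1/α,1/α}. -/

import Mathlib

open TensorProduct

noncomputable def r12 (k V : Type*) [Field k] [AddCommGroup V] [Module k V]
    (R : V ⊗[k] V →ₗ[k] V ⊗[k] V) :
    (V ⊗[k] V) ⊗[k] V →ₗ[k] (V ⊗[k] V) ⊗[k] V :=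
  TensorProduct.map R LinearMap.id

noncomputable def r23 (k V : Type*) [Field k] [AddCommGroup V] [Module k V]
    (R : V ⊗[k] V →ₗ[k] V ⊗[k] V) :
    (V ⊗[k] V) ⊗[k] V →ₗ[k] (V ⊗[k] V) ⊗[k] V :=
  (TensorProduct.assoc k V V V).symm.toLinearMap ∘ₗ
    TensorProduct.map LinearMap.id R ∘ₗ (TensorProduct.assoc k V V V).toLinearMap

noncomputable def tau (k V : Type*) [Field k] [AddCommGroup V] [Module k V] :
    V ⊗[k] V →ₗ[k] V ⊗[k] V :=
  (TensorProduct.comm k V V).toLinearMap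

noncomputable def r13 (k V : Type*) [Field k] [AddCommGroup V] [Module k V]
    (R : V ⊗[k] V →ₗ[k] V ⊗[k] V) :
    (V ⊗[k] V) ⊗[k] V →ₗ[k] (V ⊗[k] V) ⊗[k] V :=
  r23 k V (tau k V) ∘ₗ r12 k V R ∘ₗ r23 k V (tau k V)

/-- The braid equation. -/
def IsBraid (k V : Type*) [Field k] [AddCommGroup V] [Module k V]
    (R : V ⊗[k] V →ₗ[k] V ⊗[k] V) : Prop :=
  r12 k V R ∘ₗ r23 k V R ∘ₗ r12 k V R = r23 k V R ∘ₗ r12 k V R ∘ₗ r23 k V R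

/-- The (constant) quantum Yang–Baxter equation. -/
def IsQYBE (k V : Type*) [Field k] [AddCommGroup V] [Module k V]
    (R : V ⊗[k] V →ₗ[k] V ⊗[k] V) : Prop :=
  r12 k V R ∘ₗ r13 k V R ∘ₗ r23 k V R = r23 k V R ∘ₗ r13 k V R ∘ₗ r12 k V R

theorem inverse_of_algebra_yb_operator
    (k A : Type*) [Field k] [Ring A] [Algebra k A]
    (α β : k) (hα : α ≠ 0) (hβ : β ≠ 0)
    (R S : A ⊗[k] A →ₗ[k] A ⊗[k] A)
    (hR : ∀ a b : A, R (a ⊗ₜ b) =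
      α • ((a * b) ⊗ₜ (1 : A)) + β • ((1 : A) ⊗ₜ (a * b)) - α • (a ⊗ₜ b))
    (hS : ∀ a b : A, S (a ⊗ₜ b) =
      (1 / β) • ((a * b) ⊗ₜ (1 : A)) + (1 / α) • ((1 : A) ⊗ₜ (a * b))
        - (1 / α) • (a ⊗ₜ b)) :
    R ∘ₗ S = LinearMap.id ∧ S ∘ₗ R = LinearMap.id := by
  constructor <;>
  · apply TensorProduct.ext'
    intro a b
    simp only [LinearMap.comp_apply, LinearMap.id_apply, hR, hS, map_add, map_sub,
      map_smul, one_mul, mul_one, smul_sub, smul_add, smul_smul]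
    field_simp
    simp only [one_smul]; abel
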